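/- Suppose S ⊆ ℝ^d is Lebesgue measurable, B ⊆ ℝ^d is finite, and the indicator function of S satisfies Σ_{b∈B} 1_S(x−b) = 1 for almost every x ∈ ℝ^d. Then the support of the tempered distribution 1_S^ (Fourier transform of 1_S) is contained in {0} ∪ {ξ : Σ_{b∈B} e^{−2πi b·ξ} = 0}. -/

import Mathlib

open Complex MeasureTheory SchwartzMap
open scoped RealInnerProductSpace SchwartzMap FourierTransform Manifold

lemma temperate_of_compact_support' {E : Type*} [NormedAddCommGroup E] [NormedSpace ℝ E]
    {f : E → ℂ} (hf : ContDiff ℝ ((⊤:ℕ∞):WithTop ℕ∞) f)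
    (h : HasCompactSupport f) : Function.HasTemperateGrowth f := by
  refine ⟨hf, fun n => ?_⟩
  obtain ⟨C, hC⟩ := ((h.iteratedFDeriv n).exists_bound_of_continuous
    (hf.continuous_iteratedFDeriv (by exact_mod_cast le_top)))
  exact ⟨0, C, by simpa using hC⟩

/-- If `1_S * δ_B = 1` a.e., then the distributional Fourier transform of `1_S`
(acting on Schwartz functions by `φ ↦ ∫ 1_S ⬝ 𝓕φ`) is supported in
`{0} ∪ {ξ : Σ_{b∈B} e^{-2πi b·ξ} = 0}`: every point outside this set has an open
neighborhood on which the distribution vanishes. -/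
theorem support_fourier_indicator_of_tiling
    {d : ℕ} (S : Set (EuclideanSpace ℝ (Fin d))) (hS : MeasurableSet S)
    (B : Finset (EuclideanSpace ℝ (Fin d)))
    (htile : ∀ᵐ x : EuclideanSpace ℝ (Fin d),
      ∑ b ∈ B, S.indicator (fun _ => (1 : ℝ)) (x - b) = 1) :
    ∀ ξ : EuclideanSpace ℝ (Fin d), ξ ≠ 0 →
      (∑ b ∈ B, Complex.exp (-(2 * Real.pi * Complex.I * (⟪b, ξ⟫ : ℝ)))) ≠ 0 →
      ∃ U : Set (EuclideanSpace ℝ (Fin d)), IsOpen U ∧ ξ ∈ U ∧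
        ∀ φ : 𝓢(EuclideanSpace ℝ (Fin d), ℂ), tsupport φ ⊆ U →
          ∫ x, S.indicator (fun _ => (1 : ℂ)) x * (fourierTransformCLM ℂ φ) x = 0 := by
  intro ξ₀ hξ₀ hm₀
  set m : EuclideanSpace ℝ (Fin d) → ℂ :=
    fun ξ => ∑ b ∈ B, Complex.exp (-(2 * Real.pi * Complex.I * (⟪b, ξ⟫ : ℝ))) with hm_def
  have hm_smooth : ContDiff ℝ ((⊤:ℕ∞):WithTop ℕ∞) m := by
    apply ContDiff.sum
    intro b _
    apply Complex.contDiff_exp.comp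
    apply ContDiff.neg
    exact contDiff_const.mul (Complex.ofRealCLM.contDiff.comp (innerSL ℝ b).contDiff)
  have hm_cont : Continuous m := hm_smooth.continuous
  have hmnorm : 0 < ‖m ξ₀‖ := norm_pos_iff.mpr hm₀
  set c : ℝ := ‖m ξ₀‖ / 2 with hc_def
  have hc : 0 < c := by positivity
  set V : Set (EuclideanSpace ℝ (Fin d)) := {ξ | c < ‖m ξ‖} with hV_def
  have hVopen : IsOpen V := isOpen_lt continuous_const hm_cont.norm
  set U : Set (EuclideanSpace ℝ (Fin d)) := V ∩ Metric.ball ξ₀ (‖ξ₀‖ / 2) with hU_def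
  have hUopen : IsOpen U := hVopen.inter Metric.isOpen_ball
  have hξ₀norm : 0 < ‖ξ₀‖ := norm_pos_iff.mpr hξ₀
  refine ⟨U, hUopen, ⟨half_lt_self hmnorm, Metric.mem_ball_self (by positivity)⟩, ?_⟩
  intro φ hφU
  -- closure of U is compact and `m` does not vanish on it
  have hUclosure : closure U ⊆ {ξ | m ξ ≠ 0} := by
    intro ξ hξ
    have h1 : ξ ∈ closure V := closure_mono Set.inter_subset_left hξ
    have h2 : closure V ⊆ {ξ | c ≤ ‖m ξ‖} :=
      closure_minimal (fun x hx => show c ≤ ‖m x‖ from le_of_lt hx)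
        (isClosed_le continuous_const hm_cont.norm)
    intro h0
    have := h2 h1
    rw [Set.mem_setOf_eq, h0, norm_zero] at this
    exact absurd this (not_le.mpr hc)
  have hUcompact : IsCompact (closure U) := by
    refine Metric.isCompact_of_isClosed_isBounded isClosed_closure ?_
    exact (Metric.isBounded_ball.subset Set.inter_subset_right).closure
  -- smooth cutoff
  obtain ⟨χ, hχ0, hχ1, _⟩ := exists_contMDiffMap_zero_one_of_isClosed (n := (⊤:ℕ∞)) (𝓘(ℝ, EuclideanSpace ℝ (Fin d)))
    hUopen.isClosed_compl (isClosed_tsupport φ)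
    (by rwa [Set.disjoint_compl_left_iff_subset])
  have hχsm : ContDiff ℝ ((⊤:ℕ∞):WithTop ℕ∞) χ := by
    rw [← contMDiff_iff_contDiff]; exact χ.contMDiff
  have hχsupp : Function.support (fun x => χ x) ⊆ U := by
    intro x hx
    by_contra hxU
    exact hx (hχ0 hxU)
  set h : EuclideanSpace ℝ (Fin d) → ℂ := fun ξ => (χ ξ : ℂ) * (m ξ)⁻¹ with hh_def
  have hh_supp : tsupport h ⊆ closure U := by
    apply closure_minimal _ isClosed_closure
    intro x hx
    refine subset_closure (hχsupp ?_)
    intro h0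
    apply hx
    simp only [hh_def, Function.mem_support] at h0 ⊢
    simp [h0]
  have hh_cs : HasCompactSupport h := hUcompact.of_isClosed_subset (isClosed_tsupport h) hh_supp
  have hh_sm : ContDiff ℝ ((⊤:ℕ∞):WithTop ℕ∞) h := by
    rw [contDiff_iff_contDiffAt]
    intro x
    by_cases hx : m x = 0
    · have hxU : x ∉ closure U := fun hmem => hUclosure hmem hx
      have hev : h =ᶠ[nhds x] (fun _ => 0) := by
        filter_upwards [isClosed_closure.isOpen_compl.mem_nhds hxU] with y hy
        have hyχ : χ y = 0 := by
          by_contra h0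
          exact hy (subset_closure (hχsupp h0))
        simp [hh_def, hyχ]
      exact (contDiffAt_const (c := (0:ℂ))).congr_of_eventuallyEq hev
    · exact ((Complex.ofRealCLM.contDiff.comp hχsm).contDiffAt).mul
        ((hm_smooth.contDiffAt).inv hx)
  have hh_temp := temperate_of_compact_support' hh_sm hh_cs
  set ψ : 𝓢(EuclideanSpace ℝ (Fin d), ℂ) :=
    SchwartzMap.bilinLeftCLM (ContinuousLinearMap.mul ℝ ℂ) hh_temp φ with hψ_def
  have hψ_apply : ∀ ξ, ψ ξ = φ ξ * h ξ := fun ξ => rfl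
  have key : ∀ ξ, φ ξ = m ξ * ψ ξ := by
    intro ξ
    by_cases hξ : ξ ∈ tsupport φ
    · have h1 : χ ξ = 1 := hχ1 hξ
      have h2 : m ξ ≠ 0 := hUclosure (subset_closure (hφU hξ))
      rw [hψ_apply, hh_def]
      simp only [h1, Complex.ofReal_one, one_mul]
      field_simp
    · have h0 : φ ξ = 0 := image_eq_zero_of_notMem_tsupport hξ
      simp [hψ_apply, h0]
  -- integrability facts
  have hψint : Integrable (fun ξ => ψ ξ) volume := ψ.integrable
  have expI : ∀ w : EuclideanSpace ℝ (Fin d),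
      Integrable (fun ξ => Complex.exp ((↑(-2 * Real.pi * ⟪ξ, w⟫) : ℂ) * Complex.I) * ψ ξ)
        volume := by
    intro w
    refine hψint.bdd_mul (c := 1) ?_ (Filter.Eventually.of_forall fun ξ => ?_)
    · apply Continuous.aestronglyMeasurable
      apply Complex.continuous_exp.comp
      exact ((Complex.continuous_ofReal.comp
        (continuous_const.mul ((innerSL ℝ (E := EuclideanSpace ℝ (Fin d))).continuous₂.comp
          (continuous_id.prodMk continuous_const)))).mul continuous_const)
    · rw [Complex.norm_exp]
      simp
  -- Step A : pointwise decomposition of 𝓕φ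
  have stepA : ∀ x, fourierTransformCLM ℂ φ x = ∑ b ∈ B, fourierTransformCLM ℂ ψ (x + b) := by
    intro x
    rw [fourierTransformCLM_apply, SchwartzMap.fourier_coe, Real.fourier_eq']
    have hpt : ∀ ξ, Complex.exp ((↑(-2 * Real.pi * ⟪ξ, x⟫) : ℂ) * Complex.I) • φ ξ
        = ∑ b ∈ B, Complex.exp ((↑(-2 * Real.pi * ⟪ξ, x + b⟫) : ℂ) * Complex.I) * ψ ξ := by
      intro ξ
      rw [smul_eq_mul, key ξ, hm_def]
      rw [show (∑ b ∈ B, Complex.exp (-(2 * Real.pi * Complex.I * (⟪b, ξ⟫ : ℝ)))) * ψ ξ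
        = ∑ b ∈ B, Complex.exp (-(2 * Real.pi * Complex.I * (⟪b, ξ⟫ : ℝ))) * ψ ξ from
          Finset.sum_mul ..]
      rw [Finset.mul_sum]
      refine Finset.sum_congr rfl fun b _ => ?_
      rw [← mul_assoc, ← Complex.exp_add]
      congr 2
      have hin : ⟪ξ, x + b⟫ = ⟪ξ, x⟫ + ⟪b, ξ⟫ := by
        rw [inner_add_right, real_inner_comm b ξ]
      rw [hin]
      push_cast
      ring
    rw [integral_congr_ae (Filter.Eventually.of_forall hpt)]
    rw [integral_finset_sum _ (fun b _ => expI (x + b))]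
    refine Finset.sum_congr rfl fun b _ => ?_
    rw [fourierTransformCLM_apply, SchwartzMap.fourier_coe, Real.fourier_eq']
    simp_rw [smul_eq_mul]
  -- indicator facts
  have hind_meas : AEStronglyMeasurable (fun x => S.indicator (fun _ => (1:ℂ)) x) volume :=
    (measurable_const.indicator hS).aestronglyMeasurable
  have hind_bd : ∀ z, ‖S.indicator (fun _ => (1:ℂ)) z‖ ≤ 1 := by
    intro z
    by_cases hz : z ∈ S
    · rw [Set.indicator_of_mem hz]; simp
    · rw [Set.indicator_of_notMem hz]; simp
  have hFψint : Integrable (fun y => fourierTransformCLM ℂ ψ y) volume :=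
    (fourierTransformCLM ℂ ψ).integrable
  have hFψt : ∀ b : EuclideanSpace ℝ (Fin d),
      Integrable (fun x => fourierTransformCLM ℂ ψ (x + b)) volume := by
    intro b
    exact (measurePreserving_add_right volume b).integrable_comp_emb
      (MeasurableEquiv.addRight b).measurableEmbedding |>.mpr hFψint
  have intB : ∀ b : EuclideanSpace ℝ (Fin d),
      Integrable (fun x => S.indicator (fun _ => (1:ℂ)) x * fourierTransformCLM ℂ ψ (x + b))
        volume := fun b => (hFψt b).bdd_mul (c := 1) hind_meas (Filter.Eventually.of_forall hind_bd)
  have intD : ∀ b : EuclideanSpace ℝ (Fin d),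
      Integrable (fun y => S.indicator (fun _ => (1:ℂ)) (y - b) * fourierTransformCLM ℂ ψ y)
        volume := by
    intro b
    refine hFψint.bdd_mul (c := 1) ?_ (Filter.Eventually.of_forall fun y => hind_bd _)
    exact ((measurable_const.indicator hS).comp (measurable_id.sub measurable_const)).aestronglyMeasurable
  -- translation step
  have stepC : ∀ b : EuclideanSpace ℝ (Fin d),
      (∫ x, S.indicator (fun _ => (1:ℂ)) x * fourierTransformCLM ℂ ψ (x + b))
        = ∫ y, S.indicator (fun _ => (1:ℂ)) (y - b) * fourierTransformCLM ℂ ψ y := by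
    intro b
    rw [← integral_add_right_eq_self
      (fun y => S.indicator (fun _ => (1:ℂ)) (y - b) * fourierTransformCLM ℂ ψ y) b]
    simp only [add_sub_cancel_right]
  -- a.e. identity over ℂ
  have hcoe : ∀ z, S.indicator (fun _ => (1:ℂ)) z = ((S.indicator (fun _ => (1:ℝ)) z : ℝ) : ℂ) := by
    intro z
    by_cases hz : z ∈ S
    · rw [Set.indicator_of_mem hz, Set.indicator_of_mem hz, Complex.ofReal_one]
    · rw [Set.indicator_of_notMem hz, Set.indicator_of_notMem hz, Complex.ofReal_zero]
  have hae : ∀ᵐ y : EuclideanSpace ℝ (Fin d),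
      (∑ b ∈ B, S.indicator (fun _ => (1:ℂ)) (y - b)) = 1 := by
    filter_upwards [htile] with y hy
    simp_rw [hcoe]
    rw [← Complex.ofReal_sum, hy, Complex.ofReal_one]
  -- Fourier inversion at 0
  have hFeq : (fun y => fourierTransformCLM ℂ ψ y) = 𝓕 (fun y => ψ y) := by
    ext y
    rw [fourierTransformCLM_apply, SchwartzMap.fourier_coe]
  have hinv : ∫ y, fourierTransformCLM ℂ ψ y = ψ 0 := by
    have h1 : 𝓕⁻ (𝓕 (fun y => ψ y)) 0 = ψ 0 :=
      hψint.fourierInv_fourier_eq (by rw [← hFeq]; exact hFψint) (ψ.continuous.continuousAt)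
    rw [← h1, Real.fourierInv_eq]
    rw [hFeq]
    simp [Real.fourierChar_apply]
  have hψ0 : ψ 0 = 0 := by
    have h0U : (0 : EuclideanSpace ℝ (Fin d)) ∉ U := by
      intro h0
      have := h0.2
      rw [Metric.mem_ball, dist_zero_left] at this
      exact absurd this (not_lt.mpr (half_le_self hξ₀norm.le))
    have hφ0 : φ 0 = 0 := image_eq_zero_of_notMem_tsupport (fun hmem => h0U (hφU hmem))
    rw [hψ_apply, hφ0, zero_mul]
  -- main computation
  calc ∫ x, S.indicator (fun _ => (1:ℂ)) x * fourierTransformCLM ℂ φ x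
      = ∫ x, ∑ b ∈ B, S.indicator (fun _ => (1:ℂ)) x * fourierTransformCLM ℂ ψ (x + b) := by
        refine integral_congr_ae (Filter.Eventually.of_forall fun x => ?_)
        dsimp only
        rw [stepA x, Finset.mul_sum]
    _ = ∑ b ∈ B, ∫ x, S.indicator (fun _ => (1:ℂ)) x * fourierTransformCLM ℂ ψ (x + b) :=
        integral_finset_sum _ (fun b _ => intB b)
    _ = ∑ b ∈ B, ∫ y, S.indicator (fun _ => (1:ℂ)) (y - b) * fourierTransformCLM ℂ ψ y :=
        Finset.sum_congr rfl (fun b _ => stepC b)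
    _ = ∫ y, ∑ b ∈ B, S.indicator (fun _ => (1:ℂ)) (y - b) * fourierTransformCLM ℂ ψ y :=
        (integral_finset_sum _ (fun b _ => intD b)).symm
    _ = ∫ y, fourierTransformCLM ℂ ψ y := by
        refine integral_congr_ae ?_
        filter_upwards [hae] with y hy
        rw [← Finset.sum_mul, hy, one_mul]
    _ = ψ 0 := hinv
    _ = 0 := hψ0
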